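/- (Mehler–Heine formula, case q(G) = G.) Assume none of α_1,…,α_d is a negative integer, and define Q_n(x) = Σ_{j=0}^n [(−n)_j / (∏_{k=1}^d (α_k+1)_j · j!)] · (−x)^j (i.e., Q_n(x) = 1Fd(−n; α_1+1,…,α_d+1; −x)). Then for every fixed x ∈ ℂ, lim_{n→∞} Q_n(x/n) = Σ_{j=0}^∞ x^j / (∏_{k=1}^d (α_k+1)_j · j!), i.e., Q_n(x/n) converges to the entire function 0Fd(—; α_1+1,…,α_d+1; x) as n → ∞ (the series on the right converging absolutely). -/

import Mathlib

open Polynomial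

/-- Pochhammer symbol `(a)_j = a(a+1)⋯(a+j−1)`. -/
noncomputable def poch (a : ℂ) (j : ℕ) : ℂ := ∏ s ∈ Finset.range j, (a + s)

set_option maxHeartbeats 1000000 in
/-- Mehler–Heine formula for `q(G) = G`: with
`Q_n(y) = Σ_{j=0}^n (−n)_j/(∏_k (α_k+1)_j j!) (−y)^j = 1Fd(−n; α+1; −y)`,
one has `lim_{n→∞} Q_n(x/n) = 0Fd(—; α+1; x)`, the series converging absolutely. -/
theorem stmt18 (d : ℕ) (α : ℕ → ℂ)
    (hα : ∀ k ∈ Finset.range d, ∀ s : ℕ, α k ≠ -((s : ℂ) + 1)) (x : ℂ) :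
    Summable (fun j : ℕ =>
      x ^ j / ((∏ k ∈ Finset.range d, poch (α k + 1) j) * (j.factorial : ℂ))) ∧
    Filter.Tendsto
      (fun n : ℕ => ∑ j ∈ Finset.range (n + 1),
        poch (-(n : ℂ)) j
          / ((∏ k ∈ Finset.range d, poch (α k + 1) j) * (j.factorial : ℂ))
          * (-(x / (n : ℂ))) ^ j)
      Filter.atTop
      (nhds (∑' j : ℕ,
        x ^ j / ((∏ k ∈ Finset.range d, poch (α k + 1) j) * (j.factorial : ℂ)))) := by
  classical
  set P : ℕ → ℂ := fun j => ∏ k ∈ Finset.range d, poch (α k + 1) j with hP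
  set D : ℕ → ℂ := fun j => P j * (j.factorial : ℂ) with hDdef
  set f : ℕ → ℂ := fun j => x ^ j / D j with hf
  set F : ℕ → ℕ → ℂ := fun n j => poch (-(n : ℂ)) j / D j * (-(x / (n : ℂ))) ^ j with hF
  set r : ℕ → ℕ → ℂ := fun n j => ∏ s ∈ Finset.range j, (((n : ℂ) - s) / n) with hr
  -- nonvanishing of denominators
  have hPne : ∀ j, P j ≠ 0 := by
    intro j
    refine Finset.prod_ne_zero_iff.2 fun k hk => ?_
    refine Finset.prod_ne_zero_iff.2 fun s _ => ?_
    intro h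
    exact hα k hk s (by linear_combination h)
  have hDne : ∀ j, D j ≠ 0 := fun j =>
    mul_ne_zero (hPne j) (by exact_mod_cast Nat.factorial_ne_zero j)
  -- the key algebraic identity
  have hkey : ∀ n j, F n j = r n j * f j := by
    intro n j
    have h1 : poch (-(n : ℂ)) j * (-(x / (n : ℂ))) ^ j = r n j * x ^ j := by
      rw [hr]
      rw [show (-(x / (n : ℂ))) ^ j = ∏ _s ∈ Finset.range j, (-(x / (n : ℂ))) by
        simp [Finset.prod_const]]
      rw [show x ^ j = ∏ _s ∈ Finset.range j, x by simp [Finset.prod_const]]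
      rw [poch, ← Finset.prod_mul_distrib, ← Finset.prod_mul_distrib]
      refine Finset.prod_congr rfl fun s _ => ?_
      field_simp
      ring
    rw [hF, hf]
    simp only [div_mul_eq_mul_div]
    rw [h1]
    ring
  -- norm bound ‖r n j‖ ≤ 1
  have hrle : ∀ n j, ‖r n j‖ ≤ 1 := by
    intro n j
    by_cases h : j ≤ n
    · rw [hr]
      simp only
      rw [norm_prod]
      refine Finset.prod_le_one (fun s _ => norm_nonneg _) fun s hs => ?_
      have hsn : s ≤ n := le_trans (Nat.le_of_lt_succ (Nat.lt_succ_of_lt (Finset.mem_range.1 hs))) h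
      have hsn' : s < j := Finset.mem_range.1 hs
      have hcast : ((n : ℂ) - s) / n = (((n - s : ℝ) / n : ℝ) : ℂ) := by
        push_cast
        rfl
      rw [hcast, Complex.norm_real, Real.norm_eq_abs]
      have hn0 : (0 : ℝ) ≤ (n : ℝ) := Nat.cast_nonneg n
      have : ((n : ℝ) - s) / n ≤ 1 := by
        rcases Nat.eq_zero_or_pos n with h0 | h0
        · simp [h0]
        · rw [div_le_one (by exact_mod_cast h0)]
          have : (s : ℝ) ≥ 0 := Nat.cast_nonneg s
          linarith
      have hge : (0 : ℝ) ≤ ((n : ℝ) - s) / n := by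
        apply div_nonneg _ hn0
        have : (s : ℝ) ≤ n := by exact_mod_cast hsn
        linarith
      rw [abs_of_nonneg hge]
      exact this
    · have : r n j = 0 := by
        rw [hr]
        refine Finset.prod_eq_zero (Finset.mem_range.2 (lt_of_not_ge h)) ?_
        simp
      rw [this]
      simp
  -- pointwise limit r n j → 1
  have hrlim : ∀ j, Filter.Tendsto (fun n : ℕ => r n j) Filter.atTop (nhds 1) := by
    intro j
    rw [hr]
    have : (1 : ℂ) = ∏ _s ∈ Finset.range j, (1 : ℂ) := by simp
    rw [this]
    refine tendsto_finset_prod _ fun s _ => ?_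
    have hdiv : Filter.Tendsto (fun n : ℕ => (s : ℂ) / n) Filter.atTop (nhds 0) := by
      have hre : Filter.Tendsto (fun n : ℕ => ((s : ℝ) / n : ℝ)) Filter.atTop (nhds 0) :=
        tendsto_const_div_atTop_nhds_zero_nat (s : ℝ)
      have h2 := (Complex.continuous_ofReal.tendsto 0).comp hre
      simp only [Complex.ofReal_zero] at h2
      refine h2.congr fun n => ?_
      simp only [Function.comp_apply]
      push_cast
      ring
    have h1 : Filter.Tendsto (fun n : ℕ => 1 - (s : ℂ) / n) Filter.atTop (nhds 1) := by
      simpa using (tendsto_const_nhds (x := (1 : ℂ))).sub hdiv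
    refine h1.congr' ?_
    filter_upwards [Filter.eventually_ge_atTop 1] with n hn
    have hn0 : (n : ℂ) ≠ 0 := by
      exact_mod_cast Nat.cast_ne_zero.2 (Nat.one_le_iff_ne_zero.1 hn)
    field_simp
  -- summability of the dominating series
  have hgsum : Summable (fun j => ‖f j‖) := by
    apply summable_of_ratio_norm_eventually_le (r := 1/2) (by norm_num)
    have hA : ∀ᶠ j : ℕ in Filter.atTop, ∀ k ∈ Finset.range d, 1 ≤ ‖α k + 1 + (j : ℂ)‖ := by
      rw [Filter.eventually_all_finset]
      intro k _
      obtain ⟨M, hM⟩ := exists_nat_ge (‖α k + 1‖ + 1)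
      filter_upwards [Filter.eventually_ge_atTop M] with j hj
      have h1 : ‖(j : ℂ)‖ ≤ ‖α k + 1 + (j : ℂ)‖ + ‖α k + 1‖ := by
        calc ‖(j : ℂ)‖ = ‖(α k + 1 + (j : ℂ)) - (α k + 1)‖ := by ring_nf
          _ ≤ ‖α k + 1 + (j : ℂ)‖ + ‖α k + 1‖ := norm_sub_le _ _
      have h2 : (M : ℝ) ≤ (j : ℝ) := by exact_mod_cast hj
      have h3 : ‖(j : ℂ)‖ = (j : ℝ) := by simp
      linarith
    have hX : ∀ᶠ j : ℕ in Filter.atTop, 2 * ‖x‖ ≤ (j : ℝ) + 1 := by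
      obtain ⟨M, hM⟩ := exists_nat_ge (2 * ‖x‖)
      filter_upwards [Filter.eventually_ge_atTop M] with j hj
      have : (M : ℝ) ≤ (j : ℝ) := by exact_mod_cast hj
      linarith
    filter_upwards [hA, hX] with j hAj hXj
    have hPj : (0 : ℝ) < ‖P j‖ := norm_pos_iff.2 (hPne j)
    have hfacj : (0 : ℝ) < (j.factorial : ℝ) := by exact_mod_cast j.factorial_pos
    set A : ℝ := ∏ k ∈ Finset.range d, ‖α k + 1 + (j : ℂ)‖ with hAdef
    have hA1 : (1 : ℝ) ≤ A := by
      rw [hAdef]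
      calc (1 : ℝ) = ∏ _k ∈ Finset.range d, (1 : ℝ) := by simp
        _ ≤ ∏ k ∈ Finset.range d, ‖α k + 1 + (j : ℂ)‖ :=
          Finset.prod_le_prod (fun _ _ => zero_le_one) hAj
    have hPstep : P (j+1) = P j * ∏ k ∈ Finset.range d, (α k + 1 + (j : ℂ)) := by
      rw [hP]
      simp only
      rw [← Finset.prod_mul_distrib]
      refine Finset.prod_congr rfl fun k _ => ?_
      rw [poch, poch, Finset.prod_range_succ]
    have hPsucc : ‖P (j+1)‖ = ‖P j‖ * A := by
      rw [hPstep, norm_mul, hAdef]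
      congr 1
      exact norm_prod _ _
    have hDn : ∀ i, ‖D i‖ = ‖P i‖ * (i.factorial : ℝ) := by
      intro i
      rw [hDdef]
      simp [norm_mul]
    have hfn : ∀ i, ‖f i‖ = ‖x‖ ^ i / (‖P i‖ * (i.factorial : ℝ)) := by
      intro i
      rw [hf]
      simp only
      rw [norm_div, norm_pow, hDn]
    rw [Real.norm_eq_abs, Real.norm_eq_abs, abs_of_nonneg (norm_nonneg _),
      abs_of_nonneg (norm_nonneg _), hfn, hfn, hPsucc]
    have hfs : ((j+1).factorial : ℝ) = ((j : ℝ) + 1) * (j.factorial : ℝ) := by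
      rw [Nat.factorial_succ]; push_cast; ring
    rw [hfs]
    clear_value r F f D P A
    have hApos : (0 : ℝ) < A := zero_lt_one.trans_le hA1
    have hj1 : (0 : ℝ) < (j : ℝ) + 1 := by positivity
    have hd1 : (0 : ℝ) < ‖P j‖ * A * (((j : ℝ) + 1) * (j.factorial : ℝ)) :=
      mul_pos (mul_pos hPj hApos) (mul_pos hj1 hfacj)
    have hd2 : (0 : ℝ) < ‖P j‖ * (j.factorial : ℝ) := mul_pos hPj hfacj
    have key : 2 * ‖x‖ ≤ A * ((j : ℝ) + 1) := by
      calc 2 * ‖x‖ ≤ (j : ℝ) + 1 := hXj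
        _ = 1 * ((j : ℝ) + 1) := (one_mul _).symm
        _ ≤ A * ((j : ℝ) + 1) := by
          apply mul_le_mul_of_nonneg_right hA1; positivity
    have h2x : ‖x‖ ^ (j+1) ≤ ‖x‖ ^ j * (A * ((j : ℝ) + 1)) * (1/2) := by
      calc ‖x‖ ^ (j+1) = ‖x‖ ^ j * (2 * ‖x‖) * (1/2) := by ring
        _ ≤ ‖x‖ ^ j * (A * ((j : ℝ) + 1)) * (1/2) := by
            apply mul_le_mul_of_nonneg_right _ (by norm_num)
            exact mul_le_mul_of_nonneg_left key (by positivity)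
    calc ‖x‖ ^ (j+1) / (‖P j‖ * A * (((j : ℝ) + 1) * (j.factorial : ℝ)))
        ≤ (‖x‖ ^ j * (A * ((j : ℝ) + 1)) * (1/2))
            / (‖P j‖ * A * (((j : ℝ) + 1) * (j.factorial : ℝ))) := by gcongr
      _ = 1/2 * (‖x‖ ^ j / (‖P j‖ * (j.factorial : ℝ))) := by
          rw [show (1:ℝ)/2 * (‖x‖ ^ j / (‖P j‖ * (j.factorial : ℝ)))
              = ‖x‖ ^ j / (‖P j‖ * (j.factorial : ℝ) * 2) by ring]
          rw [div_eq_div_iff hd1.ne' (by positivity : (0:ℝ) < ‖P j‖ * (j.factorial : ℝ) * 2).ne']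
          ring
  have hsumf : Summable f := Summable.of_norm hgsum
  refine ⟨hsumf, ?_⟩
  -- the bound on F
  have hbound : ∀ n, ∀ j, ‖F n j‖ ≤ ‖f j‖ := by
    intro n j
    rw [hkey, norm_mul]
    calc ‖r n j‖ * ‖f j‖ ≤ 1 * ‖f j‖ :=
        mul_le_mul_of_nonneg_right (hrle n j) (norm_nonneg _)
      _ = ‖f j‖ := one_mul _
  -- pointwise limits of F
  have hFlim : ∀ j, Filter.Tendsto (fun n => F n j) Filter.atTop (nhds (f j)) := by
    intro j
    have := (hrlim j).mul_const (f j)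
    rw [one_mul] at this
    exact this.congr fun n => (hkey n j).symm
  have main := tendsto_tsum_of_dominated_convergence (f := F) (g := f)
    (bound := fun j => ‖f j‖) hgsum hFlim (Filter.Eventually.of_forall hbound)
  have heq : ∀ n : ℕ, ∑' j, F n j = ∑ j ∈ Finset.range (n + 1), F n j := by
    intro n
    refine tsum_eq_sum fun j hj => ?_
    have hnj : n < j := by
      by_contra h
      exact hj (Finset.mem_range.2 (Nat.lt_succ_of_le (le_of_not_gt h)))
    have hpz : poch (-(n : ℂ)) j = 0 := by
      rw [poch]
      refine Finset.prod_eq_zero (Finset.mem_range.2 hnj) ?_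
      simp
    rw [hF]
    simp [hpz]
  exact main.congr heq
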